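/- arXiv:0904.2336 — 7 statements merged into one kernel-verified Lean document; each statement's English description precedes it below -/
import Mathlib

section
/- Let R_A, R_B, R_A'', R_B'' be positive real numbers and D_A, D_B, D_A'', D_B'' real numbers. Set R_E = R_A + R_B, D_E = D_A + D_B, R_E'' = R_A'' + R_B'', D_E'' = D_A'' + D_B'', and for each pair write μ_X = D_X / R_X. Assume μ_B ≥ μ_A, μ_{A''} ≥ μ_A, μ_{B''} ≥ μ_B, and R_E''/R_E ≥ R_A''/R_A. Then μ_{E''} ≥ μ_E. If moreover μ_{A''} > μ_A or μ_{B''} > μ_B, then μ_{E''} > μ_E. -/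
/-- Slope comparison lemma: ranks are positive reals, degrees reals,
slope of (D, R) is D/R; (E) = (A)+(B), (E'') = (A'')+(B''). -/
theorem slope_lemma (RA RB RA'' RB'' DA DB DA'' DB'' : ℝ)
    (hRA : 0 < RA) (hRB : 0 < RB) (hRA'' : 0 < RA'') (hRB'' : 0 < RB'')
    (hBA : DB / RB ≥ DA / RA)
    (hA : DA'' / RA'' ≥ DA / RA)
    (hB : DB'' / RB'' ≥ DB / RB)
    (hR : (RA'' + RB'') / (RA + RB) ≥ RA'' / RA) :
    (DA'' + DB'') / (RA'' + RB'') ≥ (DA + DB) / (RA + RB) ∧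
    ((DA'' / RA'' > DA / RA ∨ DB'' / RB'' > DB / RB) →
      (DA'' + DB'') / (RA'' + RB'') > (DA + DB) / (RA + RB)) := by
  have hRE : (0:ℝ) < RA + RB := by linarith
  have hRE'' : (0:ℝ) < RA'' + RB'' := by linarith
  rw [ge_iff_le, div_le_div_iff₀ hRA hRB] at hBA
  rw [ge_iff_le, div_le_div_iff₀ hRA hRA''] at hA
  rw [ge_iff_le, div_le_div_iff₀ hRB hRB''] at hB
  rw [ge_iff_le, div_le_div_iff₀ hRA hRE] at hR
  have key : (0:ℝ) ≤ (DB * RA - DA * RB) * ((RA'' + RB'') * RA - RA'' * (RA + RB)) :=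
    mul_nonneg (by linarith) (by linarith)
  constructor
  · rw [ge_iff_le, div_le_div_iff₀ hRE hRE'']
    nlinarith [mul_le_mul_of_nonneg_right hA (by positivity : (0:ℝ) ≤ RB * (RA + RB)),
      mul_le_mul_of_nonneg_right hB (by positivity : (0:ℝ) ≤ RA * (RA + RB)),
      mul_pos hRA hRB]
  · rintro (h | h)
    · rw [gt_iff_lt, div_lt_div_iff₀ hRA hRA''] at h
      rw [gt_iff_lt, div_lt_div_iff₀ hRE hRE'']
      nlinarith [mul_lt_mul_of_pos_right h (by positivity : (0:ℝ) < RB * (RA + RB)),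
        mul_le_mul_of_nonneg_right hB (by positivity : (0:ℝ) ≤ RA * (RA + RB)),
        mul_pos hRA hRB]
    · rw [gt_iff_lt, div_lt_div_iff₀ hRB hRB''] at h
      rw [gt_iff_lt, div_lt_div_iff₀ hRE hRE'']
      nlinarith [mul_le_mul_of_nonneg_right hA (by positivity : (0:ℝ) ≤ RB * (RA + RB)),
        mul_lt_mul_of_pos_right h (by positivity : (0:ℝ) < RA * (RA + RB)),
        mul_pos hRA hRB]
end

section
/- Let A be a commutative ring, z ∈ A, and M a finite-length A-module with z^n M = 0 for some n. Then for every i ≥ 0, the length of z^i M / z^{i+1} M equals the length of (ann_M(z^{i+1})) / (ann_M(z^i)), where ann_M(z^j) = { m ∈ M : z^j m = 0 }. -/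
/-- The length of a module, defined as the Krull dimension of its lattice of submodules. -/
noncomputable def moduleLength (A : Type*) [Ring A] (M : Type*) [AddCommGroup M]
    [Module A M] : WithBot ℕ∞ :=
  Order.krullDim (Submodule A M)

open Order Classical in

lemma card_filter_lt_le_height {α : Type*} [PartialOrder α] [DecidableRel ((· < ·) : α → α → Prop)] (f : ℕ → α) (hf : Monotone f) :
    ∀ l : ℕ, (((Finset.range l).filter (fun j => f j < f (j + 1))).card : ℕ∞) ≤
      Order.height (f l) := by
  intro l
  induction l with
  | zero => simp
  | succ l ih =>
      rw [Finset.range_add_one, Finset.filter_insert]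
      by_cases h : f l < f (l + 1)
      · rw [if_pos h, Finset.card_insert_of_notMem (by simp)]
        rcases eq_or_ne (Order.height (f (l + 1))) ⊤ with htop | htop
        · simp [htop]
        · have hfin : Order.height (f l) < ⊤ :=
            lt_of_le_of_lt (Order.height_mono h.le) (lt_top_iff_ne_top.mpr htop)
          have := Order.height_strictMono h hfin
          push_cast
          exact ENat.add_one_le_iff (by simp) |>.mpr (lt_of_le_of_lt ih this)
      · have heq : f l = f (l + 1) := (hf (Nat.le_succ l)).lt_or_eq.resolve_left h
        rw [if_neg h, ← heq]
        exact ih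

open Order Classical in
lemma card_filter_lt_le_coheight {α : Type*} [PartialOrder α]
    [DecidableRel ((· < ·) : α → α → Prop)] (g : ℕ → α) (hg : Monotone g) (l : ℕ) :
    (((Finset.range l).filter (fun j => g j < g (j + 1))).card : ℕ∞) ≤
      Order.coheight (g 0) := by
  set g' : ℕ → αᵒᵈ := fun j => OrderDual.toDual (g (l - j)) with hg'
  have hg'mono : Monotone g' := fun j k hjk => by
    simp only [hg', OrderDual.toDual_le_toDual]
    exact hg (Nat.sub_le_sub_left hjk l)
  have key := card_filter_lt_le_height g' hg'mono l
  have hcard : ((Finset.range l).filter (fun j => g j < g (j + 1))).card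
      = ((Finset.range l).filter (fun j => g' j < g' (j + 1))).card := by
    apply Finset.card_nbij' (fun i => l - 1 - i) (fun i => l - 1 - i)
    · intro a ha
      simp only [Finset.coe_filter, Finset.mem_coe, Set.mem_setOf_eq, Finset.mem_filter, Finset.mem_range] at ha ⊢
      obtain ⟨hal, hlt⟩ := ha
      refine ⟨by omega, ?_⟩
      simp only [hg', OrderDual.toDual_lt_toDual]
      have h1 : l - (l - 1 - a + 1) = a := by omega
      have h2 : l - (l - 1 - a) = a + 1 := by omega
      rw [h1, h2]
      exact hlt
    · intro a ha
      simp only [Finset.coe_filter, Finset.mem_coe, Set.mem_setOf_eq, Finset.mem_filter, Finset.mem_range] at ha ⊢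
      obtain ⟨hal, hlt⟩ := ha
      simp only [hg', OrderDual.toDual_lt_toDual] at hlt
      have h1 : l - (a + 1) = l - 1 - a := by omega
      have h2 : l - a = l - 1 - a + 1 := by omega
      rw [h1, h2] at hlt
      exact ⟨by omega, hlt⟩
    · intro a ha
      simp only [Finset.coe_filter, Finset.mem_coe, Set.mem_setOf_eq, Finset.mem_filter, Finset.mem_range] at ha
      beta_reduce
      omega
    · intro a ha
      simp only [Finset.coe_filter, Finset.mem_coe, Set.mem_setOf_eq, Finset.mem_filter, Finset.mem_range] at ha
      beta_reduce
      omega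
  rw [hcard]
  have : g' l = OrderDual.toDual (g 0) := by simp [hg']
  rw [this] at key
  simpa using key

open Order Classical in
lemma moduleLength_eq_add {A : Type*} [Ring A] {M : Type*} [AddCommGroup M] [Module A M]
    (N : Submodule A M) :
    moduleLength A M = moduleLength A N + moduleLength A (M ⧸ N) := by
  have le1 : moduleLength A N ≤ (Order.height N : WithBot ℕ∞) := by
    apply iSup_le
    intro p
    let q := p.map _ (Submodule.MapSubtype.orderEmbedding N).strictMono
    have hlast : q.last ≤ N := by
      rw [show q.last = _ from LTSeries.last_map p _ _, Submodule.map_subtype_embedding_eq]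
      exact Submodule.map_subtype_le _ _
    have h2 := Order.length_le_height hlast
    have hlen : q.length = p.length := rfl
    rw [hlen] at h2
    exact_mod_cast h2
  have le2 : moduleLength A (M ⧸ N) ≤ (Order.coheight N : WithBot ℕ∞) := by
    apply iSup_le
    intro p
    let q := p.map _ (Submodule.comapMkQOrderEmbedding N).strictMono
    have hhead : N ≤ q.head := by
      rw [show q.head = _ from LTSeries.head_map p _ _, Submodule.comapMkQOrderEmbedding_eq]
      intro m hm
      rw [Submodule.mem_comap, Submodule.mkQ_apply, (Submodule.Quotient.mk_eq_zero N).mpr hm]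
      exact zero_mem _
    have h2 := Order.length_le_coheight hhead
    have hlen : q.length = p.length := rfl
    rw [hlen] at h2
    exact_mod_cast h2
  apply le_antisymm
  · -- krullDim M ≤ length N + length M/N
    apply iSup_le
    intro p
    set l := p.length with hl
    set pm : ℕ → Submodule A M := fun j => p ⟨min j l, by omega⟩ with hpm
    have pmmono : Monotone pm := fun j k hjk => p.monotone (by simp [Fin.le_def]; omega)
    have pmstrict : ∀ j < l, pm j < pm (j + 1) := fun j hj => by
      apply p.strictMono
      simp [Fin.lt_def]; omega
    set fN : ℕ → Submodule A N := fun j => Submodule.comap N.subtype (pm j) with hfN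
    set gQ : ℕ → Submodule A (M ⧸ N) := fun j => Submodule.map N.mkQ (pm j) with hgQ
    have fNmono : Monotone fN := fun j k h => Submodule.comap_mono (pmmono h)
    have gQmono : Monotone gQ := fun j k h => Submodule.map_mono (pmmono h)
    have step : ∀ j < l, fN j < fN (j + 1) ∨ gQ j < gQ (j + 1) := by
      intro j hj
      by_contra hcon
      push_neg at hcon
      obtain ⟨h1, h2⟩ := hcon
      have e1 : fN j = fN (j + 1) :=
        (fNmono (Nat.le_succ j)).lt_or_eq.resolve_left h1
      have e2 : gQ j = gQ (j + 1) :=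
        (gQmono (Nat.le_succ j)).lt_or_eq.resolve_left h2
      have i1 : pm (j + 1) ⊓ N ≤ pm j ⊓ N := by
        have h3 := congrArg (Submodule.map N.subtype) e1
        rw [Submodule.map_comap_subtype, Submodule.map_comap_subtype] at h3
        rw [inf_comm, ← h3, inf_comm]
      have i2 : pm (j + 1) ⊔ N ≤ pm j ⊔ N := by
        have h3 := congrArg (Submodule.comap N.mkQ) e2
        rw [Submodule.comap_map_mkQ, Submodule.comap_map_mkQ] at h3
        rw [sup_comm, ← h3, sup_comm]
      exact absurd (eq_of_le_of_inf_le_of_sup_le (pmmono (Nat.le_succ j)) i1 i2)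
        (pmstrict j hj).ne
    have hcard : l ≤ ((Finset.range l).filter (fun j => fN j < fN (j + 1))).card +
        ((Finset.range l).filter (fun j => gQ j < gQ (j + 1))).card := by
      have hunion : (Finset.range l) = (Finset.range l).filter (fun j => fN j < fN (j + 1)) ∪
          (Finset.range l).filter (fun j => gQ j < gQ (j + 1)) := by
        rw [← Finset.filter_or]
        exact (Finset.filter_true_of_mem (fun j hj =>
          step j (Finset.mem_range.mp hj))).symm
      calc l = (Finset.range l).card := (Finset.card_range l).symm
        _ = _ := congrArg Finset.card hunion
        _ ≤ _ := Finset.card_union_le _ _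
    have b1 : (((Finset.range l).filter (fun j => fN j < fN (j + 1))).card : WithBot ℕ∞) ≤
        moduleLength A N := by
      refine le_trans ?_ (Order.height_le_krullDim (fN l))
      exact_mod_cast card_filter_lt_le_height fN fNmono l
    have b2 : (((Finset.range l).filter (fun j => gQ j < gQ (j + 1))).card : WithBot ℕ∞) ≤
        moduleLength A (M ⧸ N) := by
      refine le_trans ?_ (Order.coheight_le_krullDim (gQ 0))
      exact_mod_cast card_filter_lt_le_coheight gQ gQmono l
    calc (l : WithBot ℕ∞) ≤ (((Finset.range l).filter (fun j => fN j < fN (j + 1))).card : ℕ)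
          + (((Finset.range l).filter (fun j => gQ j < gQ (j + 1))).card : ℕ) := by
          exact_mod_cast hcard
      _ ≤ moduleLength A N + moduleLength A (M ⧸ N) := add_le_add b1 b2
  · calc moduleLength A N + moduleLength A (M ⧸ N)
        ≤ (Order.height N : WithBot ℕ∞) + (Order.coheight N : WithBot ℕ∞) :=
          add_le_add le1 le2
      _ = ((Order.height N + Order.coheight N : ℕ∞) : WithBot ℕ∞) := by push_cast; rfl
      _ ≤ moduleLength A M := by
          rw [moduleLength, Order.krullDim_eq_iSup_height_add_coheight_of_nonempty,
            WithBot.coe_le_coe]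
          exact le_iSup (fun a => Order.height a + Order.coheight a) N

lemma moduleLength_congr {A : Type*} [Ring A] {M M₂ : Type*} [AddCommGroup M] [Module A M]
    [AddCommGroup M₂] [Module A M₂] (e : M ≃ₗ[A] M₂) :
    moduleLength A M = moduleLength A M₂ :=
  Order.krullDim_eq_of_orderIso (Submodule.orderIsoMapComap e)

lemma krullDim_le_one_of_simpleOrder {α : Type*} [PartialOrder α] [BoundedOrder α]
    [IsSimpleOrder α] : Order.krullDim α ≤ 1 := by
  apply iSup_le
  intro p
  have hlen : p.length ≤ 1 := by
    by_contra hcon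
    push_neg at hcon
    have h01 : p ⟨0, by omega⟩ < p ⟨1, by omega⟩ := p.strictMono (by simp [Fin.lt_def])
    have h12 : p ⟨1, by omega⟩ < p ⟨2, by omega⟩ := p.strictMono (by simp [Fin.lt_def])
    rcases eq_bot_or_eq_top (p ⟨1, by omega⟩) with h | h
    · rw [h] at h01; exact not_lt_bot h01
    · rw [h] at h12; exact not_top_lt h12
  exact_mod_cast Nat.cast_le.mpr hlen

lemma exists_nat_of_ne (x : WithBot ℕ∞) (h0 : 0 ≤ x) (h1 : x ≠ ⊤) : ∃ n : ℕ, x = n := by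
  cases x with
  | bot => simp at h0
  | coe y =>
      cases y with
      | top => exact absurd rfl h1
      | coe n => exact ⟨n, rfl⟩

lemma moduleLength_nat {A : Type*} [Ring A] {M : Type*} [AddCommGroup M] [Module A M]
    (h : IsFiniteLength A M) : ∃ n : ℕ, moduleLength A M = n := by
  induction h with
  | of_subsingleton =>
      exact ⟨0, le_antisymm Order.krullDim_nonpos_of_subsingleton
        Order.krullDim_nonneg⟩
  | @of_simple_quotient M _ _ N _ _ ih =>
      obtain ⟨n, hn⟩ := ih
      have hsimp : IsSimpleOrder (Submodule A (M ⧸ N)) := inferInstance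
      obtain ⟨k, hk⟩ := exists_nat_of_ne (moduleLength A (M ⧸ N))
        Order.krullDim_nonneg
        (fun htop => by
          have := krullDim_le_one_of_simpleOrder (α := Submodule A (M ⧸ N))
          rw [moduleLength] at htop
          rw [htop] at this
          exact absurd this (by simp [lt_top_iff_ne_top]; decide))
      refine ⟨n + k, ?_⟩
      rw [moduleLength_eq_add N, hn, hk]
      push_cast
      rfl

lemma ker_lsmul_eq_torsionBy (A : Type*) [CommRing A] (M : Type*) [AddCommGroup M]
    [Module A M] (c : A) :
    LinearMap.ker (LinearMap.lsmul A M c) = Submodule.torsionBy A M c := by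
  ext m
  simp [Submodule.mem_torsionBy_iff]

/-- For a finite-length module `M` over a commutative ring with `z ^ n • M = 0`, the length of
`z^i M / z^{i+1} M` equals the length of `ann_M(z^{i+1}) / ann_M(z^i)`. -/
theorem length_graded_eq (A : Type*) [CommRing A] (M : Type*) [AddCommGroup M] [Module A M]
    (z : A) (n : ℕ) (hz : ∀ m : M, z ^ n • m = 0) (hM : IsFiniteLength A M) (i : ℕ) :
    moduleLength A
      ((LinearMap.range (LinearMap.lsmul A M (z ^ i))) ⧸
        (Submodule.comap (LinearMap.range (LinearMap.lsmul A M (z ^ i))).subtype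
          (LinearMap.range (LinearMap.lsmul A M (z ^ (i + 1)))))) =
    moduleLength A
      ((Submodule.torsionBy A M (z ^ (i + 1))) ⧸
        (Submodule.comap (Submodule.torsionBy A M (z ^ (i + 1))).subtype
          (Submodule.torsionBy A M (z ^ i)))) := by
  obtain ⟨hNoeth, hArt⟩ := isFiniteLength_iff_isNoetherian_isArtinian.mp hM
  set R : ℕ → Submodule A M := fun j => LinearMap.range (LinearMap.lsmul A M (z ^ j)) with hR
  set T : ℕ → Submodule A M := fun j => Submodule.torsionBy A M (z ^ j) with hT
  have h1 : R (i + 1) ≤ R i := by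
    rintro x ⟨m, rfl⟩
    exact ⟨z • m, by
      simp only [LinearMap.lsmul_apply, ← mul_smul, ← pow_succ]⟩
  have h2 : T i ≤ T (i + 1) := by
    intro m hm
    rw [hT, Submodule.mem_torsionBy_iff] at hm ⊢
    rw [pow_succ', mul_smul, hm, smul_zero]
  -- finite length of all relevant modules
  have finSub : ∀ (M' : Type _) [AddCommGroup M'] [Module A M'] (_ : IsNoetherian A M')
      (_ : IsArtinian A M'), IsFiniteLength A M' := fun M' _ _ hN hA =>
    isFiniteLength_iff_isNoetherian_isArtinian.mpr ⟨hN, hA⟩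
  obtain ⟨a, ha⟩ := moduleLength_nat (M := T i) (finSub _ inferInstance inferInstance)
  obtain ⟨b, hb⟩ := moduleLength_nat (M := T (i + 1)) (finSub _ inferInstance inferInstance)
  obtain ⟨c, hc⟩ := moduleLength_nat (M := R i) (finSub _ inferInstance inferInstance)
  obtain ⟨d, hd⟩ := moduleLength_nat (M := R (i + 1)) (finSub _ inferInstance inferInstance)
  obtain ⟨x, hx⟩ := moduleLength_nat
    (M := R i ⧸ Submodule.comap (R i).subtype (R (i + 1)))
    (finSub _ inferInstance inferInstance)
  obtain ⟨y, hy⟩ := moduleLength_nat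
    (M := T (i + 1) ⧸ Submodule.comap (T (i + 1)).subtype (T i))
    (finSub _ inferInstance inferInstance)
  -- additivity for the two quotients
  have eqA : moduleLength A (R i) = moduleLength A (R (i + 1)) +
      moduleLength A (R i ⧸ Submodule.comap (R i).subtype (R (i + 1))) := by
    rw [moduleLength_eq_add (Submodule.comap (R i).subtype (R (i + 1))),
      moduleLength_congr (Submodule.comapSubtypeEquivOfLe h1)]
  have eqB : moduleLength A (T (i + 1)) = moduleLength A (T i) +
      moduleLength A (T (i + 1) ⧸ Submodule.comap (T (i + 1)).subtype (T i)) := by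
    rw [moduleLength_eq_add (Submodule.comap (T (i + 1)).subtype (T i)),
      moduleLength_congr (Submodule.comapSubtypeEquivOfLe h2)]
  -- kernel-range relation
  have eqKer : ∀ j : ℕ, moduleLength A M = moduleLength A (T j) + moduleLength A (R j) := by
    intro j
    rw [moduleLength_eq_add (T j)]
    congr 1
    exact moduleLength_congr
      ((Submodule.quotEquivOfEq _ _ (ker_lsmul_eq_torsionBy A M (z ^ j)).symm).trans
        (LinearMap.quotKerEquivRange (LinearMap.lsmul A M (z ^ j))))
  -- convert to natural number equations
  have e1 : c = d + x := by
    have := eqA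
    rw [hc, hd, hx] at this
    exact_mod_cast this
  have e2 : b = a + y := by
    have := eqB
    rw [hb, ha, hy] at this
    exact_mod_cast this
  have e3 : a + c = b + d := by
    have h3 := (eqKer i).symm.trans (eqKer (i + 1))
    rw [ha, hb, hc, hd] at h3
    exact_mod_cast h3
  have : x = y := by omega
  rw [hx, hy, this]
end

section
/- Let R be a discrete valuation ring with uniformizer x, and let A = R[z]/(z^2). Let I = (x, z) ⊆ A be the ideal generated by x and z. Define α : I → A ⊕ A by α(a x + b z) = (−a z, a x + b z) and β : A ⊕ A → I by β(a, b) = a x + b z. Then α is a well-defined injective A-linear map, β is surjective, and the sequence 0 → I → A ⊕ A → I → 0 is exact (the image of α equals the kernel of β). -/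
open Polynomial

/-- The local ring `A = R[z]/(z^2)` of a primitive double curve at a closed point. -/
noncomputable abbrev DoubleCurveLocalRing (R : Type*) [CommRing R] : Type _ :=
  AdjoinRoot (X ^ 2 : R[X])

lemma dc_algebraMap_eq {R : Type*} [CommRing R] (r : R) :
    algebraMap R (DoubleCurveLocalRing R) r = AdjoinRoot.mk (X ^ 2 : R[X]) (C r) := by
  rw [AdjoinRoot.algebraMap_eq]; rfl

lemma dc_zsq {R : Type*} [CommRing R] :
    (AdjoinRoot.root (X ^ 2 : R[X])) * AdjoinRoot.root (X ^ 2 : R[X]) = 0 := by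
  rw [← sq, ← AdjoinRoot.mk_X, ← map_pow, AdjoinRoot.mk_self]

lemma dc_repr {R : Type*} [CommRing R] [Nontrivial R] (c : DoubleCurveLocalRing R) :
    ∃ p q : R, c = algebraMap R (DoubleCurveLocalRing R) p
      + algebraMap R (DoubleCurveLocalRing R) q * AdjoinRoot.root (X ^ 2 : R[X]) := by
  obtain ⟨f, rfl⟩ := AdjoinRoot.mk_surjective c
  refine ⟨(f %ₘ X ^ 2).coeff 0, (f %ₘ X ^ 2).coeff 1, ?_⟩
  have hm : (X ^ 2 : R[X]).Monic := monic_X_pow 2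
  have hd : (f %ₘ X ^ 2).degree ≤ 1 := by
    have h2 := Polynomial.degree_modByMonic_lt f hm
    rw [degree_X_pow] at h2
    exact Order.le_of_lt_succ (by exact_mod_cast h2)
  have hrem : f %ₘ X ^ 2 = C ((f %ₘ X ^ 2).coeff 1) * X + C ((f %ₘ X ^ 2).coeff 0) :=
    Polynomial.eq_X_add_C_of_degree_le_one hd
  have h1 : AdjoinRoot.mk (X ^ 2 : R[X]) f = AdjoinRoot.mk (X ^ 2 : R[X]) (f %ₘ X ^ 2) := by
    rw [AdjoinRoot.mk_eq_mk]
    exact ⟨f /ₘ X ^ 2, by rw [Polynomial.modByMonic_eq_sub_mul_div f (q := X ^ 2)]; ring⟩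
  rw [h1]
  conv_lhs => rw [hrem]
  rw [map_add, map_mul, AdjoinRoot.mk_X, dc_algebraMap_eq, dc_algebraMap_eq]
  ring

lemma dc_zero {R : Type*} [CommRing R] [IsDomain R] {p q : R}
    (h : algebraMap R (DoubleCurveLocalRing R) p
      + algebraMap R (DoubleCurveLocalRing R) q * AdjoinRoot.root (X ^ 2 : R[X]) = 0) :
    p = 0 ∧ q = 0 := by
  rw [dc_algebraMap_eq, dc_algebraMap_eq, ← AdjoinRoot.mk_X, ← map_mul, ← map_add,
    AdjoinRoot.mk_eq_zero, add_comm] at h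
  have hdeg : (C q * X + C p : R[X]).degree < (X ^ 2 : R[X]).degree := by
    rw [degree_X_pow]
    exact_mod_cast Polynomial.degree_linear_lt (a := q) (b := p)
  have hz := Polynomial.eq_zero_of_dvd_of_degree_lt h hdeg
  constructor
  · have := congrArg (fun f : R[X] => f.coeff 0) hz
    simpa using this
  · have := congrArg (fun f : R[X] => f.coeff 1) hz
    simpa using this

/-- On `A = R[z]/(z^2)` with `R` a DVR with uniformizer `x`, the ideal `I = (x, z)` fits in an
exact sequence `0 → I → A ⊕ A → I → 0` where `β(a,b) = ax + bz` and
`α(ax + bz) = (-az, ax + bz)`. -/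
theorem ideal_point_exact_sequence (R : Type*) [CommRing R] [IsDomain R]
    [IsDiscreteValuationRing R] (ϖ : R) (hϖ : Irreducible ϖ) :
    ∀ (x z : DoubleCurveLocalRing R), x = algebraMap R (DoubleCurveLocalRing R) ϖ →
      z = AdjoinRoot.root (X ^ 2 : R[X]) →
    ∀ (I : Ideal (DoubleCurveLocalRing R)), I = Ideal.span {x, z} →
    ∀ (β : (DoubleCurveLocalRing R × DoubleCurveLocalRing R) →ₗ[DoubleCurveLocalRing R]
        DoubleCurveLocalRing R),
      (∀ a b : DoubleCurveLocalRing R, β (a, b) = a * x + b * z) →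
    LinearMap.range β = I ∧
    ∃ α : I →ₗ[DoubleCurveLocalRing R]
        (DoubleCurveLocalRing R × DoubleCurveLocalRing R),
      (∀ (a b : DoubleCurveLocalRing R) (h : a * x + b * z ∈ I),
          α ⟨a * x + b * z, h⟩ = (-(a * z), a * x + b * z)) ∧
      Function.Injective α ∧
      LinearMap.range α = LinearMap.ker β := by
  intro x z hx hz I hI β hβ
  subst hx hz hI
  set x := algebraMap R (DoubleCurveLocalRing R) ϖ with hx
  set z := AdjoinRoot.root (X ^ 2 : R[X]) with hz
  have hzz : z * z = 0 := dc_zsq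
  -- x is a regular element of A
  have hreg : ∀ c : DoubleCurveLocalRing R, c * x = 0 → c = 0 := by
    intro c h
    obtain ⟨p, q, rfl⟩ := dc_repr c
    rw [← hz] at h ⊢
    have e : (algebraMap R (DoubleCurveLocalRing R) p
          + algebraMap R (DoubleCurveLocalRing R) q * z) * x
        = algebraMap R (DoubleCurveLocalRing R) (p * ϖ)
          + algebraMap R (DoubleCurveLocalRing R) (q * ϖ) * z := by
      rw [map_mul, map_mul, hx]; ring
    rw [e, hz] at h
    obtain ⟨h1, h2⟩ := dc_zero h
    have hp : p = 0 := (mul_eq_zero.mp h1).resolve_right hϖ.ne_zero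
    have hq : q = 0 := (mul_eq_zero.mp h2).resolve_right hϖ.ne_zero
    rw [hp, hq]; simp
  have hinj : ∀ c c' : DoubleCurveLocalRing R, c * x = c' * x → c = c' := by
    intro c c' h
    have := hreg (c - c') (by rw [sub_mul, h, sub_self])
    exact sub_eq_zero.mp this
  have hrange : LinearMap.range β = Ideal.span {x, z} := by
    ext t
    simp only [LinearMap.mem_range, Ideal.mem_span_pair]
    constructor
    · rintro ⟨⟨a, b⟩, rfl⟩; exact ⟨a, b, (hβ a b).symm⟩
    · rintro ⟨a, b, rfl⟩; exact ⟨(a, b), hβ a b⟩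
  have hmem : ∀ a b : DoubleCurveLocalRing R, a * x + b * z ∈ Ideal.span {x, z} := fun a b =>
    Ideal.mem_span_pair.mpr ⟨a, b, rfl⟩
  have hex : ∀ t : Ideal.span {x, z}, ∃ w : DoubleCurveLocalRing R,
      w * x = -((t : DoubleCurveLocalRing R) * z) := by
    rintro ⟨t, ht⟩
    obtain ⟨a, b, rfl⟩ := Ideal.mem_span_pair.mp ht
    exact ⟨-(a * z), by linear_combination b * hzz⟩
  choose g hg using hex
  refine ⟨hrange, ⟨{
      toFun := fun t => (g t, (t : DoubleCurveLocalRing R))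
      map_add' := fun t t' => by
        have h1 : g (t + t') = g t + g t' := hinj _ _ (by
          rw [hg, add_mul, hg, hg, Submodule.coe_add]; ring)
        simp only [Prod.mk_add_mk, Submodule.coe_add, h1]
      map_smul' := fun c t => by
        have h1 : g (c • t) = c * g t := hinj _ _ (by
          rw [hg, mul_assoc, hg, SetLike.val_smul, smul_eq_mul]; ring)
        simp only [RingHom.id_apply, Prod.smul_mk, smul_eq_mul, SetLike.val_smul, h1]
      }, ?_, ?_, ?_⟩⟩
  · intro a b h
    have h2 : g ⟨a * x + b * z, h⟩ = -(a * z) := hinj _ _ (by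
      rw [hg]
      show -((a * x + b * z) * z) = -(a * z) * x
      linear_combination (-b) * hzz)
    simp only [LinearMap.coe_mk, AddHom.coe_mk, h2]
  · intro t t' h
    simp only [LinearMap.coe_mk, AddHom.coe_mk, Prod.mk.injEq] at h
    exact Subtype.ext h.2
  · ext p
    obtain ⟨a, b⟩ := p
    simp only [LinearMap.mem_range, LinearMap.mem_ker, LinearMap.coe_mk, AddHom.coe_mk,
      Prod.mk.injEq]
    constructor
    · rintro ⟨t, ht1, ht2⟩
      rw [hβ, ← ht1, ← ht2, hg]; ring
    · intro hab
      rw [hβ] at hab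
      obtain ⟨a0, a1, rfl⟩ := dc_repr a
      obtain ⟨b0, b1, rfl⟩ := dc_repr b
      rw [← hz] at hab ⊢
      have e : (algebraMap R (DoubleCurveLocalRing R) a0
            + algebraMap R (DoubleCurveLocalRing R) a1 * z) * x
          + (algebraMap R (DoubleCurveLocalRing R) b0
            + algebraMap R (DoubleCurveLocalRing R) b1 * z) * z
          = algebraMap R (DoubleCurveLocalRing R) (a0 * ϖ)
            + algebraMap R (DoubleCurveLocalRing R) (a1 * ϖ + b0) * z := by
        rw [hx]
        simp only [AdjoinRoot.algebraMap_eq, map_add, map_mul]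
        linear_combination (AdjoinRoot.of (X ^ 2 : R[X]) b1) * hzz
      rw [e, hz] at hab
      obtain ⟨h1, h2⟩ := dc_zero hab
      have ha0 : a0 = 0 := (mul_eq_zero.mp h1).resolve_right hϖ.ne_zero
      have hb0 : b0 = -(a1 * ϖ) := by linear_combination h2
      refine ⟨⟨-(algebraMap R (DoubleCurveLocalRing R) a1) * x
          + algebraMap R (DoubleCurveLocalRing R) b1 * z, hmem _ _⟩, ?_, ?_⟩
      · have hgv : g ⟨-(algebraMap R (DoubleCurveLocalRing R) a1) * x
              + algebraMap R (DoubleCurveLocalRing R) b1 * z, hmem _ _⟩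
            = algebraMap R (DoubleCurveLocalRing R) a1 * z := hinj _ _ (by
          rw [hg]
          show -((-(algebraMap R (DoubleCurveLocalRing R) a1) * x
              + algebraMap R (DoubleCurveLocalRing R) b1 * z) * z)
            = algebraMap R (DoubleCurveLocalRing R) a1 * z * x
          linear_combination (-(algebraMap R (DoubleCurveLocalRing R) b1)) * hzz)
        rw [hgv, ha0]; simp
      · show -(algebraMap R (DoubleCurveLocalRing R) a1) * x
            + algebraMap R (DoubleCurveLocalRing R) b1 * z
          = algebraMap R (DoubleCurveLocalRing R) b0
            + algebraMap R (DoubleCurveLocalRing R) b1 * z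
        rw [hb0, map_neg, map_mul, hx]; ring
end

section
/- Let R be a discrete valuation ring with uniformizer x, n ≥ 1, and A = R[z]/(z^n). Let M be a finitely generated A-module which is torsion-free, i.e. no nonzero element of M is annihilated by a power of x. Then M is reflexive: the canonical map M → Hom_A(Hom_A(M, A), A) is an isomorphism. -/
open Polynomial

/-- The local ring `A = R[z]/(z^n)` of a primitive multiple curve of multiplicity `n`. -/
noncomputable abbrev MultCurveLocalRing (R : Type*) [CommRing R] (n : ℕ) : Type _ :=
  AdjoinRoot (X ^ n : R[X])

namespace MCAux

variable {R : Type*} [CommRing R] [Nontrivial R] {n : ℕ}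

/-- The class of `z` in `A = R[z]/(z^n)`. -/
noncomputable def zz : MultCurveLocalRing R n := AdjoinRoot.root _

lemma zz_pow_n : (zz : MultCurveLocalRing R n) ^ n = 0 := by
  rw [zz, ← AdjoinRoot.mk_X, ← map_pow, AdjoinRoot.mk_self]

/-- The power basis `1, z, ..., z^(n-1)` of `A` over `R`, reindexed by `Fin n`. -/
noncomputable def mcBasis : Module.Basis (Fin n) R (MultCurveLocalRing R n) :=
  ((AdjoinRoot.powerBasis' (monic_X_pow (R := R) (n := n))).basis).reindex
    (finCongr (by simp))

lemma mcBasis_apply (i : Fin n) : (mcBasis (R := R) (n := n)) i = zz ^ (i : ℕ) := by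
  rw [mcBasis, Module.Basis.reindex_apply, PowerBasis.basis_eq_pow]
  simp [zz]

/-- The Frobenius functional: the coefficient of `z^(n-1)`. -/
noncomputable def lam (hn : 1 ≤ n) : MultCurveLocalRing R n →ₗ[R] R :=
  (mcBasis (R := R) (n := n)).coord ⟨n - 1, by omega⟩

lemma lam_zz_pow (hn : 1 ≤ n) (k : ℕ) :
    lam (R := R) hn (zz ^ k) = if k = n - 1 then 1 else 0 := by
  rcases lt_or_ge k n with h | h
  · have hb : (zz : MultCurveLocalRing R n) ^ k = mcBasis ⟨k, h⟩ :=
      (mcBasis_apply (R := R) (n := n) ⟨k, h⟩).symm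
    rw [hb, lam, Module.Basis.coord_apply, Module.Basis.repr_self, Finsupp.single_apply]
    simp [Fin.ext_iff]
  · have hk : (zz : MultCurveLocalRing R n) ^ k = 0 := by
      have : (zz : MultCurveLocalRing R n) ^ k = zz ^ n * zz ^ (k - n) := by
        rw [← pow_add]; congr 1; omega
      rw [this, zz_pow_n, zero_mul]
    rw [hk, map_zero, if_neg (by omega)]

lemma repr_eq_lam (hn : 1 ≤ n) (a : MultCurveLocalRing R n) (i : Fin n) :
    (mcBasis (R := R) (n := n)).repr a i = lam hn (zz ^ (n - 1 - (i : ℕ)) * a) := by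
  conv_rhs => rw [← (mcBasis (R := R) (n := n)).sum_repr a]
  rw [Finset.mul_sum, map_sum]
  simp_rw [mul_smul_comm, map_smul, mcBasis_apply, ← pow_add, lam_zz_pow hn,
    smul_eq_mul]
  rw [Finset.sum_eq_single i]
  · rw [if_pos (by have := i.isLt; omega), mul_one]
  · intro j _ hj
    rw [if_neg, mul_zero]
    have hi := i.isLt; have hjl := j.isLt
    intro hc
    exact hj (Fin.ext (by omega))
  · intro h; exact absurd (Finset.mem_univ i) h

lemma eq_zero_of_lam (hn : 1 ≤ n) (a : MultCurveLocalRing R n)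
    (h : ∀ k, k < n → lam (R := R) hn (zz ^ k * a) = 0) : a = 0 := by
  rw [← (mcBasis (R := R) (n := n)).forall_coord_eq_zero_iff]
  intro i
  rw [Module.Basis.coord_apply, repr_eq_lam hn]
  exact h _ (by have := i.isLt; omega)

section Tmap

variable {N : Type*} [AddCommGroup N] [Module (MultCurveLocalRing R n) N]
  [Module R N] [IsScalarTower R (MultCurveLocalRing R n) N]

/-- The comparison map `Hom_A(N, A) → Hom_R(N, R)`, `f ↦ λ ∘ f`. -/
noncomputable def Tmap (hn : 1 ≤ n) :
    (N →ₗ[MultCurveLocalRing R n] MultCurveLocalRing R n) →ₗ[R] (N →ₗ[R] R) where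
  toFun f := (lam hn).comp (f.restrictScalars R)
  map_add' f g := by ext m; simp
  map_smul' r f := by ext m; simp

@[simp] lemma Tmap_apply (hn : 1 ≤ n)
    (f : N →ₗ[MultCurveLocalRing R n] MultCurveLocalRing R n) (m : N) :
    Tmap hn f m = lam hn (f m) := rfl

/-- The explicit inverse: `g ↦ (m ↦ ∑ g(z^(n-1-i) m) z^i)`, as an `R`-linear map. -/
noncomputable def liftFun (hn : 1 ≤ n) (g : N →ₗ[R] R) :
    N →ₗ[R] MultCurveLocalRing R n :=
  ∑ i ∈ Finset.range n,
    (LinearMap.toSpanSingleton R (MultCurveLocalRing R n) (zz ^ i)).comp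
      (g.comp ((LinearMap.lsmul (MultCurveLocalRing R n) N
        (zz ^ (n - 1 - i))).restrictScalars R))

lemma liftFun_apply (hn : 1 ≤ n) (g : N →ₗ[R] R) (m : N) :
    liftFun hn g m
      = ∑ i ∈ Finset.range n,
          g (((zz : MultCurveLocalRing R n) ^ (n - 1 - i)) • m) • zz ^ i := by
  rw [liftFun, LinearMap.sum_apply]
  refine Finset.sum_congr rfl fun i _ => ?_
  simp [LinearMap.toSpanSingleton_apply, LinearMap.lsmul_apply]

lemma liftFun_zz_smul (hn : 1 ≤ n) (g : N →ₗ[R] R) (m : N) :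
    liftFun hn g ((zz : MultCurveLocalRing R n) • m)
      = (zz : MultCurveLocalRing R n) • liftFun hn g m := by
  obtain ⟨p, rfl⟩ : ∃ p, n = p + 1 := ⟨n - 1, by omega⟩
  have L : liftFun hn g ((zz : MultCurveLocalRing R (p + 1)) • m) =
      ∑ i ∈ Finset.range (p + 1), g (((zz : MultCurveLocalRing R (p + 1)) ^ (p + 1 - i)) • m) • zz ^ i := by
    rw [liftFun_apply]
    refine Finset.sum_congr rfl fun i hi => ?_
    rw [Finset.mem_range] at hi
    rw [show p + 1 - 1 - i = p - i from by omega, smul_smul, ← pow_succ,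
      show p - i + 1 = p + 1 - i from by omega]
  have Rr : (zz : MultCurveLocalRing R (p + 1)) • liftFun hn g m =
      ∑ i ∈ Finset.range (p + 1), g (((zz : MultCurveLocalRing R (p + 1)) ^ (p - i)) • m) • zz ^ (i + 1) := by
    rw [liftFun_apply, Finset.smul_sum]
    refine Finset.sum_congr rfl fun i hi => ?_
    rw [smul_comm (zz : MultCurveLocalRing R (p + 1)) (g ((zz ^ (p + 1 - 1 - i)) • m)),
      smul_eq_mul, ← pow_succ', show p + 1 - 1 - i = p - i from by omega]
  rw [L, Rr, Finset.sum_range_succ' _ p, Finset.sum_range_succ]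
  have h0 : ((zz : MultCurveLocalRing R (p + 1)) ^ (p + 1)) = 0 := zz_pow_n
  have hF0 : g (((zz : MultCurveLocalRing R (p + 1)) ^ (p + 1 - 0)) • m) • (zz : MultCurveLocalRing R (p + 1)) ^ 0 = 0 := by
    rw [Nat.sub_zero, h0, zero_smul, map_zero, zero_smul]
  have hGp : g (((zz : MultCurveLocalRing R (p + 1)) ^ (p - p)) • m) • (zz : MultCurveLocalRing R (p + 1)) ^ (p + 1) = 0 := by
    rw [h0, smul_zero]
  rw [hF0, hGp, add_zero, add_zero]
  refine Finset.sum_congr rfl fun i hi => ?_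
  rw [Finset.mem_range] at hi
  rw [show p + 1 - (i + 1) = p - i from by omega]

lemma liftFun_alinear (hn : 1 ≤ n) (g : N →ₗ[R] R)
    (a : MultCurveLocalRing R n) (m : N) :
    liftFun hn g (a • m) = a • liftFun hn g m := by
  let S : Subalgebra R (MultCurveLocalRing R n) :=
    { carrier := {a | ∀ m : N, liftFun hn g (a • m) = a • liftFun hn g m}
      mul_mem' := fun {a b} ha hb m => by
        rw [mul_smul, ha (b • m), hb m, mul_smul]
      one_mem' := fun m => by rw [one_smul, one_smul]
      add_mem' := fun {a b} ha hb m => by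
        rw [add_smul, map_add, ha m, hb m, add_smul]
      zero_mem' := fun m => by rw [zero_smul, zero_smul, map_zero]
      algebraMap_mem' := fun r m => by
        rw [algebraMap_smul, map_smul, algebraMap_smul] }
  have hz : (zz : MultCurveLocalRing R n) ∈ S := fun m => liftFun_zz_smul hn g m
  have hS : S = ⊤ := by
    rw [eq_top_iff, ← AdjoinRoot.adjoinRoot_eq_top (f := (X ^ n : R[X])),
      Algebra.adjoin_le_iff, Set.singleton_subset_iff]
    exact hz
  have ha : a ∈ S := hS ▸ trivial
  exact ha m

lemma Tmap_bijective (hn : 1 ≤ n) :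
    Function.Bijective (Tmap (R := R) (n := n) (N := N) hn) := by
  constructor
  · have h0 : ∀ f : N →ₗ[MultCurveLocalRing R n] MultCurveLocalRing R n,
        Tmap hn f = 0 → f = 0 := by
      intro f hf
      ext m
      show f m = 0
      refine eq_zero_of_lam hn _ fun k hk => ?_
      have h1 : (zz : MultCurveLocalRing R n) ^ k * f m
          = f (((zz : MultCurveLocalRing R n) ^ k) • m) := by
        rw [map_smul, smul_eq_mul]
      rw [h1]
      exact LinearMap.congr_fun hf (((zz : MultCurveLocalRing R n) ^ k) • m)
    intro f g hfg
    have := h0 (f - g) (by rw [map_sub, hfg, sub_self])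
    exact sub_eq_zero.mp this
  · intro g
    let f : N →ₗ[MultCurveLocalRing R n] MultCurveLocalRing R n :=
      { toFun := liftFun hn g
        map_add' := (liftFun hn g).map_add
        map_smul' := fun a m => liftFun_alinear hn g a m }
    refine ⟨f, ?_⟩
    ext m
    show lam hn (liftFun hn g m) = g m
    rw [liftFun_apply, map_sum]
    simp_rw [map_smul, lam_zz_pow hn, smul_eq_mul, mul_ite, mul_one, mul_zero]
    rw [Finset.sum_ite_eq' (Finset.range n) (n - 1)]
    rw [if_pos (Finset.mem_range.mpr (by omega))]
    rw [show n - 1 - (n - 1) = 0 from by omega, pow_zero, one_smul]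

end Tmap

end MCAux

open MCAux in
/-- Over `A = R[z]/(z^n)` with `R` a DVR with uniformizer `x`, every finitely generated
torsion-free (no nonzero element killed by a power of `x`) module is reflexive. -/
theorem torsionFree_reflexive (R : Type*) [CommRing R] [IsDomain R] [IsDiscreteValuationRing R]
    (x : R) (hx : Irreducible x) (n : ℕ) (hn : 1 ≤ n)
    (M : Type*) [AddCommGroup M] [Module (MultCurveLocalRing R n) M]
    [Module.Finite (MultCurveLocalRing R n) M]
    (htf : ∀ (m : M) (k : ℕ),
      (algebraMap R (MultCurveLocalRing R n) x) ^ k • m = 0 → m = 0) :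
    Function.Bijective (Module.Dual.eval (MultCurveLocalRing R n) M) := by
  set A := MultCurveLocalRing R n with hA
  letI : Module R M := Module.compHom M (algebraMap R A)
  haveI : IsScalarTower R A M :=
    IsScalarTower.of_algebraMap_smul fun r m => rfl
  haveI : Module.Finite R A := Module.Finite.of_basis (mcBasis (R := R) (n := n))
  haveI : Module.Finite R M := Module.Finite.trans A M
  haveI : NoZeroSMulDivisors R M := by
    refine ⟨fun {r m} h => ?_⟩
    by_cases hr : r = 0
    · exact Or.inl hr
    · refine Or.inr ?_
      obtain ⟨k, u, rfl⟩ :=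
        IsDiscreteValuationRing.eq_unit_mul_pow_irreducible hr hx
      have h1 : (x ^ k : R) • m = 0 := by
        have h2 : ((u : R) * x ^ k) • m = 0 := h
        have h3 : ((↑u⁻¹ : R) * ((u : R) * x ^ k)) • m = 0 := by
          rw [mul_smul, h2, smul_zero]
        rwa [← mul_assoc, Units.inv_mul, one_mul] at h3
      refine htf m k ?_
      rw [← map_pow]
      rwa [algebraMap_smul]
  haveI : Module.Free R M := Module.free_of_finite_type_torsion_free'
  have hR : Function.Bijective (Module.Dual.eval R M) :=
    Module.bijective_dual_eval R M
  -- The comparison maps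
  have hTM := Tmap_bijective (R := R) (n := n) (N := M) hn
  haveI : IsScalarTower R A (M →ₗ[A] A) :=
    IsScalarTower.of_algebraMap_smul fun r f => by
      ext m; simp [algebraMap_smul]
  have hS := Tmap_bijective (R := R) (n := n) (N := (M →ₗ[A] A)) hn
  set TM := Tmap (R := R) (n := n) (N := M) hn with hTMdef
  set S := Tmap (R := R) (n := n) (N := (M →ₗ[A] A)) hn with hSdef
  -- key commutativity
  have key : ∀ (m : M) (f : M →ₗ[A] A),
      S (Module.Dual.eval A M m) f = (Module.Dual.eval R M m) (TM f) := by
    intro m f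
    simp [Module.Dual.eval, S, TM]
  constructor
  · intro m m' h
    refine hR.injective ?_
    ext g
    obtain ⟨f, rfl⟩ := hTM.surjective g
    have := congrArg (fun φ => S φ f) h
    beta_reduce at this
    rw [key, key] at this
    simpa using this
  · intro φ
    let TMe := LinearEquiv.ofBijective TM hTM
    let ψ : (M →ₗ[R] R) →ₗ[R] R := (S φ).comp TMe.symm.toLinearMap
    obtain ⟨m, hm⟩ := hR.surjective ψ
    refine ⟨m, hS.injective ?_⟩
    ext f
    have h1 : S (Module.Dual.eval A M m) f = (Module.Dual.eval R M m) (TM f) := key m f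
    have h2 : (Module.Dual.eval R M m) (TM f) = ψ (TM f) := by rw [hm]
    have h3 : ψ (TM f) = S φ f := by
      show (S φ) (TMe.symm (TM f)) = S φ f
      have : TMe.symm (TM f) = f := by
        have : TM f = TMe f := rfl
        rw [this, LinearEquiv.symm_apply_apply]
      rw [this]
    rw [h1, h2, h3]
end

section
/- Let R be a discrete valuation ring with uniformizer x, n ≥ 1, and A = R[z]/(z^n). Let M be a finitely generated A-module. Then M is torsion-free (no nonzero element of M is killed by a power of x) if and only if the R-module M^{(1)} = { m ∈ M : z m = 0 } is a free R-module. -/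
open Polynomial

/-- The class of `z` in `R[z]/(z^n)`. -/
noncomputable abbrev MultCurveLocalRing.z (R : Type*) [CommRing R] (n : ℕ) :
    MultCurveLocalRing R n :=
  AdjoinRoot.root (X ^ n : R[X])

/-- Over `A = R[z]/(z^n)` with `R` a DVR with uniformizer `x`, a finitely generated module `M`
is torsion-free iff `M^{(1)} = { m : z • m = 0 }` is a free `R`-module. -/
theorem torsionFree_iff_free (R : Type*) [CommRing R] [IsDomain R] [IsDiscreteValuationRing R]
    (x : R) (hx : Irreducible x) (n : ℕ) (hn : 1 ≤ n)
    (M : Type*) [AddCommGroup M] [Module (MultCurveLocalRing R n) M]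
    [Module R M] [IsScalarTower R (MultCurveLocalRing R n) M]
    [Module.Finite (MultCurveLocalRing R n) M] :
    (∀ (m : M) (k : ℕ),
        (algebraMap R (MultCurveLocalRing R n) x) ^ k • m = 0 → m = 0) ↔
      Module.Free R
        (Submodule.restrictScalars R
          (Submodule.torsionBy (MultCurveLocalRing R n) M (MultCurveLocalRing.z R n))) := by
  set A := MultCurveLocalRing R n with hA
  set z := MultCurveLocalRing.z R n with hz
  set N := Submodule.restrictScalars R (Submodule.torsionBy A M z) with hN
  have hsmul : ∀ (r : R) (m : M), (algebraMap R A r) • m = r • m := fun r m =>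
    algebraMap_smul A r m
  constructor
  · intro h
    -- N is finitely generated over R and torsion-free, hence free
    haveI : Module.Finite R A := by
      have pb := AdjoinRoot.powerBasis' (g := (X ^ n : R[X])) (monic_X_pow n)
      exact Module.Finite.of_basis pb.basis
    haveI : Module.Finite R M := Module.Finite.trans A M
    haveI : IsNoetherian R M := isNoetherian_of_isNoetherianRing_of_finite R M
    haveI : Module.Finite R N :=
      Module.Finite.iff_fg.mpr (IsNoetherian.noetherian _)
    haveI : NoZeroSMulDivisors R N := by
      refine ⟨fun {r} {v} hrv => ?_⟩
      by_cases hr : r = 0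
      · exact Or.inl hr
      · right
        obtain ⟨k, u, hu⟩ := IsDiscreteValuationRing.eq_unit_mul_pow_irreducible hr hx
        have hv : r • (v : M) = 0 := by
          have := congrArg (Subtype.val) hrv
          simpa using this
        have hxk : (algebraMap R A x) ^ k • (v : M) = 0 := by
          rw [← map_pow, hsmul]
          have : (x : R) ^ k • (v : M) = (↑u⁻¹ : R) • (r • (v : M)) := by
            rw [hu, mul_smul, ← mul_smul, ← mul_smul]
            congr 1
            simp
          rw [this, hv, smul_zero]
        have : (v : M) = 0 := h (v : M) k hxk
        exact Subtype.ext this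
    exact Module.free_of_finite_type_torsion_free'
  · intro hfree m k hkm
    haveI : Module.Free R N := hfree
    by_contra hm
    -- z^n • m = 0
    have hzn : (z : A) ^ n = 0 := by
      rw [hz, MultCurveLocalRing.z, ← AdjoinRoot.mk_X, ← map_pow, AdjoinRoot.mk_self]
    have hex : ∃ t, (z : A) ^ t • m = 0 := ⟨n, by rw [hzn, zero_smul]⟩
    classical
    set j := Nat.find hex with hj
    have hjspec : (z : A) ^ j • m = 0 := Nat.find_spec hex
    have hjpos : 0 < j := by
      rcases Nat.eq_zero_or_pos j with h0 | h
      · exfalso; apply hm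
        have := hjspec
        rw [h0, pow_zero, one_smul] at this
        exact this
      · exact h
    have hjm : (z : A) ^ (j - 1) • m ≠ 0 := Nat.find_min hex (Nat.sub_lt hjpos one_pos)
    set w : M := (z : A) ^ (j - 1) • m with hw
    have hwmem : w ∈ N := by
      show z • w = 0
      rw [hw, ← mul_smul, ← pow_succ']
      rw [Nat.sub_add_cancel hjpos] at *
      exact hjspec
    have hxkw : (x : R) ^ k • (⟨w, hwmem⟩ : N) = 0 := by
      apply Subtype.ext
      show (x : R) ^ k • w = 0
      rw [hw, ← hsmul (x ^ k), smul_comm, map_pow, hkm, smul_zero]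
    rcases smul_eq_zero.mp hxkw with h1 | h2
    · exact pow_ne_zero k hx.ne_zero h1
    · apply hjm
      have := congrArg (Subtype.val) h2
      simpa [hw] using this
end

section
/- Let R be a discrete valuation ring, and let n, k, a be integers with a ≥ 1 and 1 ≤ k < n − 1. Let A = R[z]/(z^n), M = A^a ⊕ (A/(z^k)), and N = M/z^{n−1}M ≅ (A/(z^{n−1}))^a ⊕ (A/(z^k)). Let λ : ann_M(z) → ann_N(z) be the map induced by the projection M → N. Then ann_N(z) = im(λ) ⊕ z^{n−2}N, i.e. the submodule { u ∈ N : zu = 0 } is the internal direct sum of the image of λ and of z^{n−2}N. -/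
open Polynomial

/-- The stalk `M = A^a ⊕ A/(z^k)` of a quasi locally free sheaf of rigid type. -/
noncomputable abbrev RigidStalk (R : Type*) [CommRing R] (n k a : ℕ) : Type _ :=
  (Fin a → MultCurveLocalRing R n) ×
    (MultCurveLocalRing R n ⧸ Ideal.span {MultCurveLocalRing.z R n ^ k})

private theorem annz_aux (R : Type*) [CommRing R] [IsDomain R] (n : ℕ) (hn : 1 ≤ n)
    (x : AdjoinRoot (X ^ n : R[X])) (hx : AdjoinRoot.root (X ^ n : R[X]) * x = 0) :
    ∃ y, x = AdjoinRoot.root (X ^ n : R[X]) ^ (n - 1) * y := by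
  obtain ⟨f, rfl⟩ := AdjoinRoot.mk_surjective x
  have h0 : AdjoinRoot.mk (X ^ n : R[X]) (X * f) = AdjoinRoot.mk _ 0 := by
    simpa using hx
  rw [AdjoinRoot.mk_eq_mk] at h0
  simp only [sub_zero] at h0
  obtain ⟨c, hc⟩ := h0
  have hXn : (X : R[X]) ^ n = X * X ^ (n - 1) := by
    conv_lhs => rw [show n = (n-1)+1 by omega]
    ring
  have : f = X ^ (n - 1) * c := by
    apply mul_left_cancel₀ (X_ne_zero (R := R))
    rw [hc, hXn]; ring
  exact ⟨AdjoinRoot.mk _ c, by rw [this]; simp [AdjoinRoot.mk_eq_mk]⟩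

private theorem qzero_aux (A : Type*) [CommRing A] (zz : A) (k j : ℕ) (hkj : k ≤ j)
    (q : A ⧸ Ideal.span {zz ^ k}) : zz ^ j • q = 0 := by
  obtain ⟨x, rfl⟩ := Ideal.Quotient.mk_surjective q
  have h1 : zz ^ j • (Ideal.Quotient.mk (Ideal.span {zz ^ k}) x) =
      Ideal.Quotient.mk _ (zz ^ j * x) := rfl
  rw [h1, Ideal.Quotient.eq_zero_iff_mem]
  exact Ideal.mul_mem_right _ _ (Ideal.mem_span_singleton.mpr (pow_dvd_pow _ hkj))

private theorem main_aux (A : Type*) [CommRing A] (zz : A) (n k a : ℕ)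
    (hk1 : 1 ≤ k) (hk : k < n - 1)
    (hann : ∀ x : A, zz * x = 0 → ∃ y, x = zz ^ (n - 1) * y)
    (π : ((Fin a → A) × (A ⧸ Ideal.span {zz ^ k})) →ₗ[A]
        ((Fin a → A) × (A ⧸ Ideal.span {zz ^ k})) ⧸
          LinearMap.range (LinearMap.lsmul A ((Fin a → A) × (A ⧸ Ideal.span {zz ^ k}))
            (zz ^ (n - 1))))
    (hπ : π = Submodule.mkQ _) :
    Submodule.map π (Submodule.torsionBy A ((Fin a → A) × (A ⧸ Ideal.span {zz ^ k})) zz) ⊔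
        LinearMap.range (LinearMap.lsmul A _ (zz ^ (n - 2))) =
      Submodule.torsionBy A _ zz ∧
    Submodule.map π (Submodule.torsionBy A ((Fin a → A) × (A ⧸ Ideal.span {zz ^ k})) zz) ⊓
        LinearMap.range (LinearMap.lsmul A _ (zz ^ (n - 2))) = ⊥ := by
  subst hπ
  have hn3 : 3 ≤ n := by omega
  have hzz1 : zz * zz ^ (n - 2) = zz ^ (n - 1) := by
    conv_rhs => rw [show n - 1 = (n-2)+1 by omega]
    rw [pow_succ']
  have hzz2 : zz ^ (n - 2) * zz = zz ^ (n - 1) := by rw [mul_comm]; exact hzz1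
  have hker : ∀ m : (Fin a → A) × (A ⧸ Ideal.span {zz ^ k}),
      Submodule.mkQ (LinearMap.range (LinearMap.lsmul A
        ((Fin a → A) × (A ⧸ Ideal.span {zz ^ k})) (zz ^ (n - 1)))) m = 0
      ↔ ∃ m', zz ^ (n - 1) • m' = m := by
    intro m
    rw [Submodule.mkQ_apply, Submodule.Quotient.mk_eq_zero]
    exact ⟨fun ⟨m', hm'⟩ => ⟨m', hm'⟩, fun ⟨m', hm'⟩ => ⟨m', hm'⟩⟩
  constructor
  · apply le_antisymm
    · apply sup_le
      · rintro u hu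
        rw [Submodule.mem_map] at hu
        obtain ⟨m, hm, rfl⟩ := hu
        rw [Submodule.mem_torsionBy_iff] at hm
        rw [Submodule.mem_torsionBy_iff, ← map_smul, hm, map_zero]
      · rintro u ⟨v, rfl⟩
        rw [Submodule.mem_torsionBy_iff]
        obtain ⟨m, rfl⟩ := Submodule.mkQ_surjective _ v
        simp only [LinearMap.lsmul_apply]
        rw [← map_smul, ← map_smul, smul_smul, hzz1, hker]
        exact ⟨m, rfl⟩
    · intro u hu
      rw [Submodule.mem_torsionBy_iff] at hu
      obtain ⟨m, rfl⟩ := Submodule.mkQ_surjective _ u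
      rw [← map_smul, hker] at hu
      obtain ⟨m', hm'⟩ := hu
      -- first components
      have h1 : ∀ i, zz * (m.1 i - zz ^ (n - 2) * m'.1 i) = 0 := by
        intro i
        have h := congrFun (congrArg Prod.fst hm') i
        simp only [Prod.smul_fst, Pi.smul_apply, smul_eq_mul] at h
        rw [mul_sub, ← mul_assoc, hzz1, h, sub_self]
      choose y hy using fun i => hann _ (h1 i)
      have hcc : ∀ i, m.1 i = zz ^ (n - 2) * (m'.1 i + zz * y i) := by
        intro i
        calc m.1 i = (m.1 i - zz ^ (n-2) * m'.1 i) + zz ^ (n-2) * m'.1 i := by ring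
        _ = zz ^ (n-1) * y i + zz ^ (n-2) * m'.1 i := by rw [← hy i]
        _ = zz ^ (n-2) * (m'.1 i + zz * y i) := by rw [← hzz2]; ring
      -- second component
      have h2 : zz • m.2 = 0 := by
        have h := congrArg Prod.snd hm'
        simp only [Prod.smul_snd] at h
        rw [← h, qzero_aux A zz k (n-1) (by omega)]
      have hmeq : m = ((0 : Fin a → A), m.2) +
          zz ^ (n - 2) • (((fun i => m'.1 i + zz * y i), 0) :
            (Fin a → A) × (A ⧸ Ideal.span {zz ^ k})) := by
        apply Prod.ext
        · funext i
          simp only [Prod.fst_add, Prod.smul_fst, Pi.add_apply, Pi.smul_apply, Pi.zero_apply,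
            smul_eq_mul, zero_add]
          exact hcc i
        · simp only [Prod.snd_add, Prod.smul_snd, smul_zero, add_zero]
      rw [hmeq, map_add]
      apply Submodule.add_mem_sup
      · apply Submodule.mem_map_of_mem
        rw [Submodule.mem_torsionBy_iff]
        apply Prod.ext
        · funext i
          simp only [Prod.smul_fst, Pi.smul_apply, Pi.zero_apply, smul_eq_mul, mul_zero,
            Prod.fst_zero]
        · simpa using h2
      · rw [map_smul]
        exact ⟨Submodule.mkQ _ (((fun i => m'.1 i + zz * y i), 0) :
          (Fin a → A) × (A ⧸ Ideal.span {zz ^ k})), rfl⟩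
  · rw [eq_bot_iff]
    intro u hu
    rw [Submodule.mem_inf] at hu
    obtain ⟨hu1, hu2⟩ := hu
    rw [Submodule.mem_map] at hu1
    obtain ⟨m, hm, rfl⟩ := hu1
    rw [Submodule.mem_torsionBy_iff] at hm
    obtain ⟨v, hv⟩ := hu2
    obtain ⟨m', rfl⟩ := Submodule.mkQ_surjective _ v
    simp only [LinearMap.lsmul_apply] at hv
    have h0 : Submodule.mkQ (LinearMap.range (LinearMap.lsmul A
        ((Fin a → A) × (A ⧸ Ideal.span {zz ^ k})) (zz ^ (n - 1))))
        (m - zz ^ (n - 2) • m') = 0 := by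
      rw [map_sub, map_smul, hv, sub_self]
    rw [hker] at h0
    obtain ⟨w, hw⟩ := h0
    have h2 : m.2 = 0 := by
      have h := congrArg Prod.snd hw
      simp only [Prod.smul_snd, Prod.snd_sub] at h
      rw [qzero_aux A zz k (n-1) (by omega), qzero_aux A zz k (n-2) (by omega)] at h
      simpa using h.symm
    have h1 : ∀ i, zz * m.1 i = 0 := by
      intro i
      have h := congrFun (congrArg Prod.fst hm) i
      simpa only [Prod.smul_fst, Pi.smul_apply, smul_eq_mul, Prod.fst_zero,
        Pi.zero_apply] using h
    choose y hy using fun i => hann _ (h1 i)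
    have hmz : zz ^ (n - 1) • ((y, 0) : (Fin a → A) × (A ⧸ Ideal.span {zz ^ k})) = m := by
      apply Prod.ext
      · funext i
        simp only [Prod.smul_fst, Pi.smul_apply, smul_eq_mul]
        exact (hy i).symm
      · simp only [Prod.smul_snd, smul_zero, h2]
    rw [Submodule.mem_bot, hker]
    exact ⟨(y, 0), hmz⟩

/-- For `M = A^a ⊕ A/(z^k)` over `A = R[z]/(z^n)` (`a ≥ 1`, `1 ≤ k < n−1`) and
`N = M/z^{n−1}M`, the annihilator of `z` in `N` is the internal direct sum of the image under
the projection `λ` of `ann_M(z)` and of `z^{n−2}N`. -/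
theorem restriction_splits (R : Type*) [CommRing R] [IsDomain R] [IsDiscreteValuationRing R]
    (n k a : ℕ) (ha : 1 ≤ a) (hk1 : 1 ≤ k) (hk : k < n - 1) :
    ∀ (π : RigidStalk R n k a →ₗ[MultCurveLocalRing R n]
        ((RigidStalk R n k a) ⧸
          LinearMap.range
            (LinearMap.lsmul (MultCurveLocalRing R n) (RigidStalk R n k a)
              (MultCurveLocalRing.z R n ^ (n - 1))))),
      π = Submodule.mkQ _ →
      Submodule.map π
          (Submodule.torsionBy (MultCurveLocalRing R n) (RigidStalk R n k a)
            (MultCurveLocalRing.z R n)) ⊔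
        LinearMap.range
          (LinearMap.lsmul (MultCurveLocalRing R n) _
            (MultCurveLocalRing.z R n ^ (n - 2))) =
        Submodule.torsionBy (MultCurveLocalRing R n) _ (MultCurveLocalRing.z R n) ∧
      Submodule.map π
          (Submodule.torsionBy (MultCurveLocalRing R n) (RigidStalk R n k a)
            (MultCurveLocalRing.z R n)) ⊓
        LinearMap.range
          (LinearMap.lsmul (MultCurveLocalRing R n) _
            (MultCurveLocalRing.z R n ^ (n - 2))) = ⊥ := by
  intro π hπ
  exact main_aux (MultCurveLocalRing R n) (MultCurveLocalRing.z R n) n k a hk1 hk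
    (annz_aux R n (by omega)) π hπ
end

section
/- Let R be a discrete valuation ring with uniformizer x and residue-characteristic-independent quotient, n ≥ 2, and A = R[z]/(z^n). Let I = (x, z) ⊆ A. Then: (1) every element of I can be written ax + bz with a, b ∈ A, and the class of a in A/(z) ≅ R depends only on the element ax + bz (not on the representation); (2) the resulting A-linear map φ : I → A/(z), ax + bz ↦ a mod (z), is surjective with kernel exactly zA, giving an exact sequence 0 → zA → I → A/(z) → 0. -/
open Polynomial

set_option maxHeartbeats 1000000 in
/-- In `A = R[z]/(z^n)` with `R` a DVR with uniformizer `ϖ`, `x = ϖ` and `z` as above, every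
element of `I = (x, z)` is of the form `ax + bz`, the class of `a` in `A/(z)` depends only on
the element, and the resulting `A`-linear map `φ : I → A/(z)`, `ax + bz ↦ a mod (z)`, is
surjective with kernel `I ∩ zA`, giving an exact sequence `0 → zA → I → A/(z) → 0`. -/
theorem ideal_point_sequence (R : Type*) [CommRing R] [IsDomain R] [IsDiscreteValuationRing R]
    (ϖ : R) (hϖ : Irreducible ϖ) (n : ℕ) (hn : 2 ≤ n) :
    ∀ (x z : MultCurveLocalRing R n), x = algebraMap R (MultCurveLocalRing R n) ϖ →
      z = MultCurveLocalRing.z R n →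
    ∀ (I : Ideal (MultCurveLocalRing R n)), I = Ideal.span {x, z} →
    (∀ u ∈ I, ∃ a b : MultCurveLocalRing R n, u = a * x + b * z) ∧
    (∀ a b a' b' : MultCurveLocalRing R n, a * x + b * z = a' * x + b' * z →
      Ideal.Quotient.mk (Ideal.span {z}) a = Ideal.Quotient.mk (Ideal.span {z}) a') ∧
    (∃ φ : I →ₗ[MultCurveLocalRing R n]
        (MultCurveLocalRing R n ⧸ (Ideal.span {z} : Ideal (MultCurveLocalRing R n))),
      (∀ (a b : MultCurveLocalRing R n) (h : a * x + b * z ∈ I),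
        φ ⟨a * x + b * z, h⟩ = Ideal.Quotient.mk (Ideal.span {z}) a) ∧
      Function.Surjective φ ∧
      LinearMap.ker φ =
        Submodule.comap (Submodule.subtype I)
          (Ideal.span {z} : Ideal (MultCurveLocalRing R n))) := by
  intro x z hx hz I hI
  have hn0 : n ≠ 0 := by omega
  have h0 : (X ^ n : R[X]).eval₂ (RingHom.id R) 0 = 0 := by
    simp [zero_pow hn0]
  set ψ : MultCurveLocalRing R n →+* R := AdjoinRoot.lift (RingHom.id R) 0 h0 with hψ
  have hψz : ψ z = 0 := by rw [hz]; exact AdjoinRoot.lift_root h0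
  have hψx : ψ x = ϖ := by rw [hx, AdjoinRoot.algebraMap_eq]; exact AdjoinRoot.lift_of h0
  -- key : c - algebraMap (ψ c) ∈ span {z}
  have key : ∀ c : MultCurveLocalRing R n, c - algebraMap R (MultCurveLocalRing R n) (ψ c) ∈ Ideal.span {z} := by
    intro c
    obtain ⟨p, rfl⟩ := AdjoinRoot.mk_surjective c
    have h1 : ψ (AdjoinRoot.mk _ p) = p.coeff 0 := by
      rw [hψ, AdjoinRoot.lift_mk, eval₂_at_zero]
      rfl
    rw [h1, AdjoinRoot.algebraMap_eq, hz]
    refine Ideal.mem_span_singleton.mpr ⟨AdjoinRoot.mk _ p.divX, ?_⟩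
    have : AdjoinRoot.of (X ^ n : R[X]) (p.coeff 0) = AdjoinRoot.mk _ (C (p.coeff 0)) :=
      (AdjoinRoot.mk_C _).symm
    rw [this, MultCurveLocalRing.z, ← AdjoinRoot.mk_X, ← map_mul, ← map_sub]
    congr 1
    linear_combination -X_mul_divX_add p
  have hker : ∀ c : MultCurveLocalRing R n, c ∈ Ideal.span {z} → ψ c = 0 := by
    intro c hc
    obtain ⟨d, rfl⟩ := Ideal.mem_span_singleton.mp hc
    rw [map_mul, hψz, zero_mul]
  have memiff : ∀ c : MultCurveLocalRing R n, c ∈ Ideal.span {z} ↔ ψ c = 0 := by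
    intro c
    refine ⟨hker c, fun h => ?_⟩
    have := key c
    rwa [h, map_zero, sub_zero] at this
  -- well-definedness
  have wd : ∀ a b a' b' : MultCurveLocalRing R n, a * x + b * z = a' * x + b' * z →
      Ideal.Quotient.mk (Ideal.span {z}) a = Ideal.Quotient.mk (Ideal.span {z}) a' := by
    intro a b a' b' h
    have h1 : (a - a') * x = (b' - b) * z := by linear_combination h
    have h2 : ψ ((a - a') * x) = 0 := by
      rw [h1, map_mul, hψz, mul_zero]
    rw [map_mul, hψx, map_sub] at h2
    have h3 : ψ a = ψ a' := by
      rcases mul_eq_zero.mp h2 with h | h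
      · exact sub_eq_zero.mp h
      · exact absurd h hϖ.ne_zero
    refine Ideal.Quotient.eq.mpr ((memiff _).mpr ?_)
    rw [map_sub, h3, sub_self]
  set mkq := Ideal.Quotient.mk (Ideal.span {z} : Ideal (MultCurveLocalRing R n)) with hmkq
  have hmkz : mkq z = 0 :=
    Ideal.Quotient.eq_zero_iff_mem.mpr (Ideal.mem_span_singleton_self z)
  have hreg : ∀ q q' : MultCurveLocalRing R n ⧸ (Ideal.span {z} : Ideal (MultCurveLocalRing R n)), q * mkq x = q' * mkq x → q = q' := by
    intro q q' h
    obtain ⟨a, rfl⟩ := Ideal.Quotient.mk_surjective q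
    obtain ⟨a', rfl⟩ := Ideal.Quotient.mk_surjective q'
    rw [← map_mul, ← map_mul] at h
    obtain ⟨c, hc⟩ := Ideal.mem_span_singleton.mp (Ideal.Quotient.eq.mp h)
    have : a * x + 0 * z = a' * x + c * z := by
      rw [zero_mul, add_zero, mul_comm c z, ← hc]; ring
    exact wd a 0 a' c this
  -- existence of representations
  have hrep : ∀ u : I, ∃ a b : MultCurveLocalRing R n, (u : MultCurveLocalRing R n) = a * x + b * z := by
    intro u
    have hu : (u : MultCurveLocalRing R n) ∈ Ideal.span {x, z} := hI ▸ u.2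
    obtain ⟨a, b, hab⟩ := Ideal.mem_span_pair.mp hu
    exact ⟨a, b, hab.symm⟩
  classical
  set f : I → MultCurveLocalRing R n ⧸ (Ideal.span {z} : Ideal (MultCurveLocalRing R n)) :=
    fun u => mkq (Classical.choose (hrep u)) with hf
  have hfu : ∀ u : I, f u * mkq x = mkq u := by
    intro u
    obtain ⟨b, hb⟩ := Classical.choose_spec (hrep u)
    conv_rhs => rw [hb]
    rw [hf]
    dsimp only
    rw [map_add, map_mul, map_mul, hmkz, mul_zero, add_zero]
  have hsmul : ∀ (c : MultCurveLocalRing R n) (q : MultCurveLocalRing R n ⧸ (Ideal.span {z} : Ideal (MultCurveLocalRing R n))), c • q = mkq c * q := by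
    intro c q
    obtain ⟨a, rfl⟩ := Ideal.Quotient.mk_surjective q
    rw [← map_mul]
    rfl
  set φ : I →ₗ[MultCurveLocalRing R n] MultCurveLocalRing R n ⧸ (Ideal.span {z} : Ideal (MultCurveLocalRing R n)) :=
    { toFun := f
      map_add' := by
        intro u v
        refine hreg _ _ ?_
        rw [add_mul, hfu, hfu, hfu, ← map_add]
        rfl
      map_smul' := by
        intro c u
        refine hreg _ _ ?_
        rw [RingHom.id_apply, hsmul, mul_assoc, hfu, hfu, ← map_mul]
        congr 1 } with hφ
  have hφchar : ∀ u : I, φ u * mkq x = mkq u := hfu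
  refine ⟨fun u hu => by
      obtain ⟨a, b, hab⟩ := hrep ⟨u, hu⟩; exact ⟨a, b, hab⟩,
    wd, φ, ?_, ?_, ?_⟩
  · intro a b h
    refine hreg _ _ ?_
    rw [hφchar]
    show mkq (a * x + b * z) = _
    rw [map_add, map_mul, map_mul, hmkz, mul_zero, add_zero]
  · intro q
    obtain ⟨c, rfl⟩ := Ideal.Quotient.mk_surjective q
    have hmem : c * x ∈ I := by
      rw [hI]
      exact Ideal.mul_mem_left _ c (Ideal.subset_span (Set.mem_insert x {z}))
    refine ⟨⟨c * x, hmem⟩, hreg _ _ ?_⟩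
    rw [hφchar]
    show mkq (c * x) = mkq c * mkq x
    rw [map_mul]
  · ext u
    simp only [LinearMap.mem_ker, Submodule.mem_comap, Submodule.subtype_apply]
    constructor
    · intro h
      have : mkq ↑u = 0 := by rw [← hφchar u, h, zero_mul]
      exact Ideal.Quotient.eq_zero_iff_mem.mp this
    · intro h
      refine hreg _ _ ?_
      rw [hφchar u, zero_mul]
      exact Ideal.Quotient.eq_zero_iff_mem.mpr h
end
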